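/- Suppose X satisfies the δ-annular decay property and 0 < α < δ. If u ∈ BMO(X) and 𝓜_α u ≢ ∞, then 𝓜_α u is α-Hölder continuous with ‖𝓜_α u‖_{C^{0,α}} ≤ C ‖u‖_{BMO}. -/

import Mathlib

open MeasureTheory Metric
open scoped ENNReal


namespace FrMaxAux

lemma real_ratio {B b θ : ℝ} (hθ0 : 0 < θ) (hθ : θ ≤ 1/2) (hB : 0 ≤ B)
    (h : B ≤ b + θ*B) : B ≤ (1+2*θ)*b := by
  have h4 : (1-θ) * B ≤ b := by nlinarith
  have hkeyθ : (0:ℝ) ≤ θ * (1 - 2*θ) := mul_nonneg hθ0.le (by linarith)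
  nlinarith [h4, hkeyθ]

lemma real_absorb {p sα a a2 E D₀ N θ : ℝ} (hp1 : 1 < p) (hsα : 0 < sα)
    (hθ0 : 0 < θ) (hθτ : 2*θ ≤ p - 1) (hE : 0 ≤ E)
    (h1 : p * (sα * a2) ≤ E + sα * a)
    (h2 : a ≤ a2 + 2*D₀*N) :
    2*θ*(sα*a) ≤ E + (4*D₀*p/(p-1))*θ*N*sα := by
  have hp1x : (0:ℝ) < p - 1 := by linarith
  have hlev : (p - 1) * (sα * a) ≤ E + 2*p*D₀*N*sα := by
    have h2' := mul_le_mul_of_nonneg_left h2 hsα.le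
    nlinarith [h1, h2', hp1]
  have hfield : (p-1) * ((4*D₀*p/(p-1))*θ*N*sα) = 4*D₀*p*θ*N*sα := by
    field_simp
  have hgoal : (p-1) * (2*θ*(sα*a)) ≤ (p-1) * (E + (4*D₀*p/(p-1))*θ*N*sα) := by
    rw [mul_add, hfield]
    have hmul := mul_le_mul_of_nonneg_left hlev (by linarith : (0:ℝ) ≤ 2*θ)
    nlinarith [hmul]
  exact le_of_mul_le_mul_left hgoal hp1x


variable {X : Type*} [MeasurableSpace X] {μ : Measure X} {s t : Set X} {f g : X → ℝ}

lemma avg_abs_le (hf : IntegrableOn f s μ) :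
    |⨍ x in s, f x ∂μ| ≤ ⨍ x in s, |f x| ∂μ := by
  rw [setAverage_eq, setAverage_eq, smul_eq_mul, smul_eq_mul, abs_mul,
    abs_of_nonneg (inv_nonneg.2 measureReal_nonneg)]
  gcongr
  exact (norm_integral_le_integral_norm f).trans_eq (by simp [Real.norm_eq_abs])

lemma avg_mono (hf : IntegrableOn f s μ) (hg : IntegrableOn g s μ)
    (h : ∀ x, f x ≤ g x) :
    ⨍ x in s, f x ∂μ ≤ ⨍ x in s, g x ∂μ := by
  rw [setAverage_eq, setAverage_eq, smul_eq_mul, smul_eq_mul]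
  exact mul_le_mul_of_nonneg_left (integral_mono hf hg h)
    (inv_nonneg.2 ENNReal.toReal_nonneg)

lemma avg_sub_const (hs0 : μ s ≠ 0) (hsT : μ s ≠ ⊤) (hf : IntegrableOn f s μ) (c : ℝ) :
    ⨍ x in s, (f x - c) ∂μ = (⨍ x in s, f x ∂μ) - c := by
  rw [setAverage_eq, setAverage_eq, integral_sub hf (integrableOn_const hsT),
    setIntegral_const, smul_eq_mul, smul_eq_mul, smul_eq_mul, mul_sub, ← mul_assoc,
    inv_mul_cancel₀ (by simp [Measure.real, ENNReal.toReal_ne_zero, hs0, hsT]), one_mul]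

lemma avg_add_const (hs0 : μ s ≠ 0) (hsT : μ s ≠ ⊤) (hf : IntegrableOn f s μ) (c : ℝ) :
    ⨍ x in s, (f x + c) ∂μ = (⨍ x in s, f x ∂μ) + c := by
  have := avg_sub_const (f := fun x => f x + c) hs0 hsT
    (hf.add (integrableOn_const hsT)) c
  simp only [add_sub_cancel_right] at this
  linarith [this]

lemma avg_nonneg (h : ∀ x, 0 ≤ f x) : 0 ≤ ⨍ x in s, f x ∂μ := by
  rw [setAverage_eq, smul_eq_mul]
  exact mul_nonneg (inv_nonneg.2 ENNReal.toReal_nonneg) (integral_nonneg h)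

/-- ratio comparison of averages of a nonnegative function over nested sets -/
lemma avg_ratio {D : ℝ} (hD : 0 ≤ D) (hst : s ⊆ t)
    (hs0 : μ s ≠ 0) (hsT : μ s ≠ ⊤) (ht0 : μ t ≠ 0) (htT : μ t ≠ ⊤)
    (hμ : μ t ≤ ENNReal.ofReal D * μ s)
    (hg : IntegrableOn g t μ) (hgpos : ∀ x, 0 ≤ g x) :
    ⨍ x in s, g x ∂μ ≤ D * ⨍ x in t, g x ∂μ := by
  have hint : ∫ x in s, g x ∂μ ≤ ∫ x in t, g x ∂μ :=
    setIntegral_mono_set hg (Filter.Eventually.of_forall hgpos)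
      (HasSubset.Subset.eventuallyLE hst)
  have hs0' : (0:ℝ) < (μ s).toReal := ENNReal.toReal_pos hs0 hsT
  have ht0' : (0:ℝ) < (μ t).toReal := ENNReal.toReal_pos ht0 htT
  have hratio : (μ t).toReal ≤ D * (μ s).toReal := by
    have := ENNReal.toReal_mono (by finiteness) hμ
    rwa [ENNReal.toReal_mul, ENNReal.toReal_ofReal hD] at this
  have hgint : (0:ℝ) ≤ ∫ x in t, g x ∂μ := integral_nonneg hgpos
  have key : (μ s).toReal⁻¹ ≤ D * (μ t).toReal⁻¹ := by
    rw [inv_eq_one_div, ← div_eq_mul_inv, div_le_div_iff₀ hs0' ht0', one_mul]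
    linarith
  calc ⨍ x in s, g x ∂μ = (μ s).toReal⁻¹ * ∫ x in s, g x ∂μ := by
        rw [setAverage_eq, smul_eq_mul]; rfl
    _ ≤ (μ s).toReal⁻¹ * ∫ x in t, g x ∂μ :=
        mul_le_mul_of_nonneg_left hint (inv_nonneg.2 ENNReal.toReal_nonneg)
    _ ≤ (D * (μ t).toReal⁻¹) * ∫ x in t, g x ∂μ := mul_le_mul_of_nonneg_right key hgint
    _ = D * ⨍ x in t, g x ∂μ := by rw [setAverage_eq, smul_eq_mul, mul_assoc]; rfl


section MetricBMO
variable {X : Type*} [MetricSpace X] [MeasurableSpace X] {μ : Measure X} {u : X → ℝ} {N : ℝ}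

/-- average of |u| over a ball -/
noncomputable def A (μ : Measure X) (u : X → ℝ) (z : X) (s : ℝ) : ℝ :=
  ⨍ w in ball z s, |u w| ∂μ

lemma A_def (μ : Measure X) (u : X → ℝ) (z : X) (s : ℝ) :
    A μ u z s = ⨍ w in ball z s, |u w| ∂μ := rfl

lemma A_nonneg (μ : Measure X) (u : X → ℝ) (z : X) (s : ℝ) : 0 ≤ A μ u z s :=
  avg_nonneg (fun _ => abs_nonneg _)

lemma osc_le
    (hball : ∀ (z : X) (s : ℝ), 0 < s → 0 < μ (ball z s) ∧ μ (ball z s) < ∞)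
    (hInt : ∀ (z : X) (s : ℝ), 0 < s → IntegrableOn u (ball z s) μ)
    (hbmo : ∀ (z : X) (s : ℝ), 0 < s →
        ⨍ w in ball z s, |u w - ⨍ v in ball z s, u v ∂μ| ∂μ ≤ N)
    (z : X) {s : ℝ} (hs : 0 < s) :
    ⨍ w in ball z s, |(|u w| - A μ u z s)| ∂μ ≤ 2 * N := by
  set B := ball z s with hB
  have h0 : μ B ≠ 0 := (hball z s hs).1.ne'
  have hT : μ B ≠ ⊤ := (hball z s hs).2.ne
  have hIu : IntegrableOn u B μ := hInt z s hs
  set m := ⨍ v in B, u v ∂μ with hm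
  set c := A μ u z s with hc
  have hIa : IntegrableOn (fun w => |u w|) B μ := hIu.abs
  have hconst : ∀ b : ℝ, IntegrableOn (fun _ => b) B μ :=
    fun b => integrableOn_const hT
  have hIum : IntegrableOn (fun w => |u w - m|) B μ := (hIu.sub (hconst m)).abs
  have hbmoB : ⨍ w in B, |u w - m| ∂μ ≤ N := hbmo z s hs
  have step1 : abs (c - |m|) ≤ N := by
    have e1 : c - |m| = ⨍ w in B, (|u w| - |m|) ∂μ := (avg_sub_const h0 hT hIa _).symm
    have e2 : |⨍ w in B, (|u w| - |m|) ∂μ| ≤ ⨍ w in B, |(|u w| - |m|)| ∂μ :=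
      avg_abs_le (hIa.sub (hconst _))
    have e3 : ⨍ w in B, |(|u w| - |m|)| ∂μ ≤ ⨍ w in B, |u w - m| ∂μ :=
      avg_mono ((hIa.sub (hconst _)).abs) hIum
        (fun w => abs_abs_sub_abs_le_abs_sub _ _)
    rw [e1]
    exact e2.trans (e3.trans hbmoB)
  have point : ∀ w, |(|u w| - c)| ≤ |u w - m| + N := by
    intro w
    calc |(|u w| - c)| ≤ |(|u w| - |m|)| + |(|m| - c)| := abs_sub_le _ _ _
      _ ≤ |u w - m| + N := by
          have h1 := abs_abs_sub_abs_le_abs_sub (u w) m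
          rw [abs_sub_comm] at step1
          exact add_le_add h1 step1
  have e4 : ⨍ w in B, |(|u w| - c)| ∂μ ≤ ⨍ w in B, (|u w - m| + N) ∂μ :=
    avg_mono ((hIa.sub (hconst c)).abs) (hIum.add (hconst N)) point
  rw [avg_add_const h0 hT hIum] at e4
  linarith

/-- comparison of averages over nested balls with measure ratio `D` -/
lemma cmp_le {D : ℝ} (hD : 0 ≤ D)
    (hball : ∀ (z : X) (s : ℝ), 0 < s → 0 < μ (ball z s) ∧ μ (ball z s) < ∞)
    (hInt : ∀ (z : X) (s : ℝ), 0 < s → IntegrableOn u (ball z s) μ)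
    (hbmo : ∀ (z : X) (s : ℝ), 0 < s →
        ⨍ w in ball z s, |u w - ⨍ v in ball z s, u v ∂μ| ∂μ ≤ N)
    {z₁ z₂ : X} {s₁ s₂ : ℝ} (hs₁ : 0 < s₁) (hs₂ : 0 < s₂)
    (hsub : ball z₁ s₁ ⊆ ball z₂ s₂)
    (hμ : μ (ball z₂ s₂) ≤ ENNReal.ofReal D * μ (ball z₁ s₁)) :
    |A μ u z₁ s₁ - A μ u z₂ s₂| ≤ 2 * D * N := by
  have h0₁ : μ (ball z₁ s₁) ≠ 0 := (hball z₁ s₁ hs₁).1.ne'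
  have hT₁ : μ (ball z₁ s₁) ≠ ⊤ := (hball z₁ s₁ hs₁).2.ne
  have h0₂ : μ (ball z₂ s₂) ≠ 0 := (hball z₂ s₂ hs₂).1.ne'
  have hT₂ : μ (ball z₂ s₂) ≠ ⊤ := (hball z₂ s₂ hs₂).2.ne
  set c := A μ u z₂ s₂ with hc
  have hI₂ : IntegrableOn (fun w => |(|u w| - c)|) (ball z₂ s₂) μ :=
    ((hInt z₂ s₂ hs₂).abs.sub (integrableOn_const hT₂)).abs
  have e2 : |A μ u z₁ s₁ - c| ≤ ⨍ w in ball z₁ s₁, |(|u w| - c)| ∂μ := by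
    rw [show A μ u z₁ s₁ - c = ⨍ w in ball z₁ s₁, (|u w| - c) ∂μ from
      (avg_sub_const h0₁ hT₁ (hInt z₁ s₁ hs₁).abs _).symm]
    exact avg_abs_le ((hInt z₁ s₁ hs₁).abs.sub (integrableOn_const hT₁))
  have e3 : ⨍ w in ball z₁ s₁, |(|u w| - c)| ∂μ ≤ D * ⨍ w in ball z₂ s₂, |(|u w| - c)| ∂μ :=
    avg_ratio hD hsub h0₁ hT₁ h0₂ hT₂ hμ hI₂ (fun x => abs_nonneg _)
  have e4 : ⨍ w in ball z₂ s₂, |(|u w| - c)| ∂μ ≤ 2 * N := osc_le hball hInt hbmo z₂ hs₂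
  calc |A μ u z₁ s₁ - c| ≤ D * ⨍ w in ball z₂ s₂, |(|u w| - c)| ∂μ := e2.trans e3
    _ ≤ D * (2 * N) := mul_le_mul_of_nonneg_left e4 hD
    _ = 2 * D * N := by ring

/-- chaining along doubling radii -/
lemma chain_le {D₀ : ℝ} (hD₀ : 0 ≤ D₀)
    (hball : ∀ (z : X) (s : ℝ), 0 < s → 0 < μ (ball z s) ∧ μ (ball z s) < ∞)
    (hInt : ∀ (z : X) (s : ℝ), 0 < s → IntegrableOn u (ball z s) μ)
    (hbmo : ∀ (z : X) (s : ℝ), 0 < s →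
        ⨍ w in ball z s, |u w - ⨍ v in ball z s, u v ∂μ| ∂μ ≤ N)
    (hdoub : ∀ (z : X) (s : ℝ), 0 < s →
        μ (ball z (2*s)) ≤ ENNReal.ofReal D₀ * μ (ball z s))
    (z : X) {ρ : ℝ} (hρ : 0 < ρ) (k : ℕ) :
    A μ u z ρ ≤ A μ u z (2^k * ρ) + 2 * D₀ * N * k := by
  induction k with
  | zero => simp
  | succ n ih =>
    have h2n : (0:ℝ) < 2^n * ρ := by positivity
    have hstep : |A μ u z (2^n * ρ) - A μ u z (2^(n+1) * ρ)| ≤ 2 * D₀ * N := by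
      refine cmp_le hD₀ hball hInt hbmo h2n (by positivity)
        (ball_subset_ball (by rw [pow_succ]; nlinarith [pow_pos (show (0:ℝ) < 2 by norm_num) n])) ?_
      have := hdoub z (2^n * ρ) h2n
      rw [show (2:ℝ) * (2^n * ρ) = 2^(n+1) * ρ by ring] at this
      exact this
    have := abs_le.1 hstep
    push_cast
    nlinarith [this.1, this.2, ih]
end MetricBMO

lemma doubling_of_annulus {X : Type*} [MetricSpace X] [MeasurableSpace X] {μ : Measure X}
    (hball : ∀ (z : X) (s : ℝ), 0 < s → 0 < μ (ball z s) ∧ μ (ball z s) < ∞)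
    {δ K : ℝ} (hδ0 : 0 < δ) (hK : 0 < K)
    (hann : ∀ (z : X) (R h : ℝ), 0 < R → 0 < h → h < R →
      μ (ball z R \ ball z (R - h)) ≤ ENNReal.ofReal (K * (h / R) ^ δ) * μ (ball z R)) :
    ∃ D₀ : ℝ, 1 ≤ D₀ ∧ ∀ (z : X) (s : ℝ), 0 < s →
      μ (ball z (2*s)) ≤ ENNReal.ofReal D₀ * μ (ball z s) := by
  set η : ℝ := min (1/2) ((2*K)⁻¹ ^ (1/δ)) with hη
  have h2K : (0:ℝ) < (2*K)⁻¹ := by positivity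
  have hη0 : 0 < η := lt_min (by norm_num) (Real.rpow_pos_of_pos h2K _)
  have hη1 : η < 1 := lt_of_le_of_lt (min_le_left _ _) (by norm_num)
  have hηδ : K * η ^ δ ≤ 1/2 := by
    have h1 : η ^ δ ≤ ((2*K)⁻¹ ^ (1/δ)) ^ δ :=
      Real.rpow_le_rpow hη0.le (min_le_right _ _) hδ0.le
    have h2 : ((2*K)⁻¹ ^ (1/δ)) ^ δ = (2*K)⁻¹ := by
      rw [← Real.rpow_mul h2K.le, one_div, inv_mul_cancel₀ hδ0.ne', Real.rpow_one]
    rw [h2] at h1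
    have : K * η ^ δ ≤ K * (2*K)⁻¹ := mul_le_mul_of_nonneg_left h1 hK.le
    have hKK : K * (2*K)⁻¹ = 1/2 := by field_simp
    linarith
  -- single step
  have step : ∀ (z : X) (R : ℝ), 0 < R → μ (ball z R) ≤ 2 * μ (ball z ((1-η)*R)) := by
    intro z R hR
    have hsmall : (0:ℝ) < (1-η)*R := by nlinarith
    have hann' := hann z R (η*R) hR (by positivity) (by nlinarith)
    have hseteq : R - η*R = (1-η)*R := by ring
    rw [hseteq] at hann'
    have hfrac : η*R/R = η := by field_simp
    rw [hfrac] at hann'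
    have hsplit : μ (ball z R) ≤ μ (ball z ((1-η)*R)) + μ (ball z R \ ball z ((1-η)*R)) := by
      refine (measure_mono ?_).trans (measure_union_le _ _)
      intro w hw
      by_cases hwin : w ∈ ball z ((1-η)*R)
      · exact Set.mem_union_left _ hwin
      · exact Set.mem_union_right _ ⟨hw, hwin⟩
    have hbig := (hball z R hR)
    have hsm := (hball z ((1-η)*R) hsmall)
    -- convert to reals
    have h1 : (μ (ball z R)).toReal ≤ (μ (ball z ((1-η)*R))).toReal
        + (K * η ^ δ) * (μ (ball z R)).toReal := by
      have hann2 : (μ (ball z R \ ball z ((1-η)*R))).toReal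
          ≤ (K * η ^ δ) * (μ (ball z R)).toReal := by
        have := ENNReal.toReal_mono (by
          exact ENNReal.mul_ne_top ENNReal.ofReal_ne_top hbig.2.ne) hann'
        rwa [ENNReal.toReal_mul, ENNReal.toReal_ofReal (by positivity)] at this
      have hadd := ENNReal.toReal_mono (by
          exact ENNReal.add_ne_top.2 ⟨hsm.2.ne, (measure_mono Set.diff_subset).trans_lt hbig.2 |>.ne⟩)
        hsplit
      rw [ENNReal.toReal_add hsm.2.ne
        ((measure_mono Set.diff_subset).trans_lt hbig.2).ne] at hadd
      linarith
    have h2 : (μ (ball z R)).toReal ≤ 2 * (μ (ball z ((1-η)*R))).toReal := by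
      nlinarith [ENNReal.toReal_nonneg (a := μ (ball z R)), hηδ,
        ENNReal.toReal_nonneg (a := μ (ball z ((1-η)*R)))]
    calc μ (ball z R) = ENNReal.ofReal (μ (ball z R)).toReal := (ENNReal.ofReal_toReal hbig.2.ne).symm
      _ ≤ ENNReal.ofReal (2 * (μ (ball z ((1-η)*R))).toReal) := ENNReal.ofReal_le_ofReal h2
      _ = 2 * μ (ball z ((1-η)*R)) := by
          rw [ENNReal.ofReal_mul (by norm_num), ENNReal.ofReal_toReal hsm.2.ne]
          norm_num
  -- iterate
  have iter : ∀ (n : ℕ) (z : X) (R : ℝ), 0 < R →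
      μ (ball z R) ≤ 2^n * μ (ball z ((1-η)^n * R)) := by
    intro n
    induction n with
    | zero => intro z R hR; simp
    | succ n ih =>
      intro z R hR
      have h1η : (0:ℝ) < 1 - η := by linarith
      calc μ (ball z R) ≤ 2 * μ (ball z ((1-η)*R)) := step z R hR
        _ ≤ 2 * (2^n * μ (ball z ((1-η)^n * ((1-η)*R)))) := by
            exact mul_le_mul_right (ih z ((1-η)*R) (by positivity)) 2
        _ = 2^(n+1) * μ (ball z ((1-η)^(n+1) * R)) := by
            rw [show (1-η)^n * ((1-η)*R) = (1-η)^(n+1) * R by ring]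
            rw [pow_succ]
            ring_nf
  obtain ⟨n, hn⟩ : ∃ n : ℕ, (1-η)^n < 1/2 :=
    exists_pow_lt_of_lt_one (by norm_num) (by linarith)
  refine ⟨2^n, one_le_pow₀ (by norm_num), fun z s hs => ?_⟩
  calc μ (ball z (2*s)) ≤ 2^n * μ (ball z ((1-η)^n * (2*s))) := iter n z (2*s) (by positivity)
    _ ≤ 2^n * μ (ball z s) := by
        refine mul_le_mul_right (measure_mono (ball_subset_ball ?_)) _
        nlinarith [pow_nonneg (show (0:ℝ) ≤ 1-η by linarith) n]
    _ = ENNReal.ofReal ((2:ℝ)^n) * μ (ball z s) := by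
        rw [ENNReal.ofReal_pow (by norm_num)]
        norm_num


end FrMaxAux

open FrMaxAux

/-- The fractional maximal function `𝓜_α u(x) = sup_{r>0} r^α ⨍_{B(x,r)} |u| dμ`. -/
noncomputable def frMax {X : Type*} [MetricSpace X] [MeasurableSpace X]
    (μ : Measure X) (α : ℝ) (u : X → ℝ) (x : X) : ℝ :=
  sSup {t : ℝ | ∃ r : ℝ, 0 < r ∧ t = r ^ α * ⨍ y in ball x r, |u y| ∂μ}

set_option maxHeartbeats 4000000 in
/-- Under the δ-annular decay property with `0 < α < δ`, if `u ∈ BMO(X)`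
with BMO norm at most `N` and `𝓜_α u` is finite, then `𝓜_α u` is α-Hölder continuous
with `‖𝓜_α u‖_{C^{0,α}} ≤ C ‖u‖_{BMO}`. -/
theorem frMax_bmo_to_holder
    {X : Type*} [MetricSpace X] [MeasurableSpace X] (μ : Measure X)
    (cd : ℝ≥0∞) (hcd : ∀ (z : X) (s : ℝ), 0 < s → μ (ball z (2 * s)) ≤ cd * μ (ball z s))
    (hball : ∀ (z : X) (s : ℝ), 0 < s → 0 < μ (ball z s) ∧ μ (ball z s) < ∞)
    (δ : ℝ) (hδ0 : 0 < δ) (hδ1 : δ ≤ 1)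
    (K : ℝ) (hK : 0 < K)
    (hann : ∀ (z : X) (R h : ℝ), 0 < R → 0 < h → h < R →
      μ (ball z R \ ball z (R - h)) ≤ ENNReal.ofReal (K * (h / R) ^ δ) * μ (ball z R))
    (α : ℝ) (hα0 : 0 < α) (hαδ : α < δ) :
    ∃ C > (0 : ℝ), ∀ (u : X → ℝ) (N : ℝ), 0 ≤ N →
      (∀ (z : X) (s : ℝ), 0 < s → IntegrableOn u (ball z s) μ) →
      (∀ (z : X) (s : ℝ), 0 < s →
        ⨍ w in ball z s, |u w - ⨍ v in ball z s, u v ∂μ| ∂μ ≤ N) →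
      (∀ x : X, BddAbove {t : ℝ | ∃ r : ℝ, 0 < r ∧ t = r ^ α * ⨍ y in ball x r, |u y| ∂μ}) →
      ∀ x y : X, |frMax μ α u x - frMax μ α u y| ≤ C * N * dist x y ^ α := by
  obtain ⟨D₀, hD₀1, hdoub⟩ := doubling_of_annulus hball hδ0 hK hann
  have hD₀0 : (0:ℝ) < D₀ := lt_of_lt_of_le one_pos hD₀1
  obtain ⟨p, hp_def, hp1⟩ : ∃ p : ℝ, p = (2:ℝ) ^ α ∧ 1 < p := by
    refine ⟨(2:ℝ) ^ α, rfl, ?_⟩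
    have := Real.rpow_lt_rpow_of_exponent_lt (show (1:ℝ) < 2 by norm_num) hα0
    rwa [Real.rpow_zero] at this
  obtain ⟨τ, hτ0, hτhalf, hτp⟩ : ∃ τ : ℝ, 0 < τ ∧ τ ≤ 1/2 ∧ τ ≤ (p-1)/2 :=
    ⟨min (1/2) ((p-1)/2), lt_min (by norm_num) (by linarith),
      min_le_left _ _, min_le_right _ _⟩
  obtain ⟨Λ, hΛ2, hΛθ⟩ : ∃ Λ : ℝ, 2 ≤ Λ ∧
      ∀ d r : ℝ, 0 < d → 0 < r → Λ * d ≤ r → K * (3*d/r) ^ δ ≤ τ := by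
    have hKτ : (0:ℝ) < K/τ := by positivity
    refine ⟨2 + 3 * ((K/τ) ^ (1/δ)), ?_, ?_⟩
    · have : (0:ℝ) < (K/τ) ^ (1/δ) := Real.rpow_pos_of_pos hKτ _
      nlinarith
    intro d r hd hr hΛdr
    set W : ℝ := (K/τ) ^ (1/δ) with hW_def
    have hW0 : 0 < W := Real.rpow_pos_of_pos hKτ _
    have hWδ : W ^ δ = K/τ := by
      rw [hW_def, ← Real.rpow_mul hKτ.le, one_div, inv_mul_cancel₀ hδ0.ne', Real.rpow_one]
    have h3dr : 3*d/r ≤ 1/W := by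
      rw [div_le_div_iff₀ hr hW0]
      nlinarith
    have h1 : (3*d/r)^δ ≤ (1/W)^δ := Real.rpow_le_rpow (by positivity) h3dr hδ0.le
    have h2 : ((1:ℝ)/W)^δ = τ/K := by
      rw [one_div, Real.inv_rpow hW0.le, hWδ, inv_div]
    calc K * (3*d/r)^δ ≤ K * (τ/K) :=
          mul_le_mul_of_nonneg_left (h1.trans_eq h2) hK.le
      _ = τ := by field_simp
  obtain ⟨C₁, hC₁_def, hC₁0⟩ : ∃ C₁ : ℝ, C₁ = 2 * D₀ * (1 + 2/α) * (2*Λ) ^ α ∧ 0 < C₁ := by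
    refine ⟨_, rfl, ?_⟩
    have h1 : (0:ℝ) < (2*Λ)^α := Real.rpow_pos_of_pos (by nlinarith) _
    have h2α : (0:ℝ) < 2/α := div_pos (by norm_num) hα0
    have h3 : (0:ℝ) < 2 * D₀ * (1 + 2/α) := by nlinarith
    exact mul_pos h3 h1
  obtain ⟨C₂, hC₂_def, hC₂0⟩ :
      ∃ C₂ : ℝ, C₂ = (4 * D₀ * p / (p-1)) * (K * 3 ^ δ * 2 ^ α) ∧ 0 < C₂ := by
    refine ⟨_, rfl, ?_⟩
    have h3 : (0:ℝ) < (3:ℝ)^δ := Real.rpow_pos_of_pos (by norm_num) _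
    have h2 : (0:ℝ) < (2:ℝ)^α := Real.rpow_pos_of_pos (by norm_num) _
    have hp1' : (0:ℝ) < p - 1 := by linarith
    have h4 : (0:ℝ) < 4 * D₀ * p / (p-1) := by positivity
    have h5 : (0:ℝ) < K * 3 ^ δ * 2 ^ α := by positivity
    exact mul_pos h4 h5
  refine ⟨C₁ + C₂, by linarith, ?_⟩
  intro u N hN hInt hbmo hBdd x₀ y₀
  have key : ∀ x y : X, 0 < dist x y →
      frMax μ α u x ≤ frMax μ α u y + (C₁ + C₂) * N * dist x y ^ α := by
    intro x y hd0
    obtain ⟨d, hd_def, hd⟩ : ∃ d : ℝ, d = dist x y ∧ 0 < d := ⟨dist x y, rfl, hd0⟩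
    have hSy : ∀ s : ℝ, 0 < s → s ^ α * A μ u y s ≤ frMax μ α u y := by
      intro s hs
      exact le_csSup (hBdd y) ⟨s, hs, rfl⟩
    have hdα : (0:ℝ) < d ^ α := Real.rpow_pos_of_pos hd _
    rw [← hd_def]
    refine csSup_le ⟨1 ^ α * A μ u x 1, 1, one_pos, rfl⟩ ?_
    rintro t ⟨r, hr, rfl⟩
    show r ^ α * A μ u x r ≤ frMax μ α u y + (C₁ + C₂) * N * d ^ α
    by_cases hcase : Λ * d ≤ r
    · -- large radius case
      obtain ⟨s, hs_def, hs0, hrs, hs2r⟩ :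
          ∃ s : ℝ, s = r + 2*d ∧ 0 < s ∧ r ≤ s ∧ s ≤ 2*r := by
        refine ⟨r + 2*d, rfl, by nlinarith, by nlinarith, by nlinarith⟩
      have ha0 : 0 ≤ A μ u y s := A_nonneg μ u y s
      have hsαa : s ^ α * A μ u y s ≤ frMax μ α u y := hSy s hs0
      obtain ⟨E, hE_def, hE0⟩ :
          ∃ E : ℝ, E = frMax μ α u y - s ^ α * A μ u y s ∧ 0 ≤ E :=
        ⟨_, rfl, by linarith⟩
      obtain ⟨θ, hθ_def, hθ0, hθτ⟩ :
          ∃ θ : ℝ, θ = K * (3*d/r) ^ δ ∧ 0 < θ ∧ θ ≤ τ := by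
        refine ⟨_, rfl, ?_, hΛθ d r hd hr hcase⟩
        have : (0:ℝ) < (3*d/r)^δ := Real.rpow_pos_of_pos (by positivity) _
        positivity
      have hθhalf : θ ≤ 1/2 := hθτ.trans hτhalf
      have hball_r := hball x r hr
      have hball_r3 := hball x (r+3*d) (by nlinarith)
      have hball_s := hball y s hs0
      -- measure ratio estimate via annular decay
      have hannθ : μ (ball x (r+3*d) \ ball x r)
          ≤ ENNReal.ofReal θ * μ (ball x (r+3*d)) := by
        have hannx := hann x (r+3*d) (3*d) (by nlinarith) (by nlinarith) (by nlinarith)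
        have hmono : K * (3*d/(r+3*d)) ^ δ ≤ θ := by
          rw [hθ_def]
          refine mul_le_mul_of_nonneg_left ?_ hK.le
          refine Real.rpow_le_rpow (by positivity) ?_ hδ0.le
          rw [div_le_div_iff₀ (by nlinarith) hr]
          nlinarith
        calc μ (ball x (r+3*d) \ ball x r)
            = μ (ball x (r+3*d) \ ball x ((r+3*d) - 3*d)) := by ring_nf
          _ ≤ ENNReal.ofReal (K * (3*d/(r+3*d)) ^ δ) * μ (ball x (r+3*d)) := hannx
          _ ≤ ENNReal.ofReal θ * μ (ball x (r+3*d)) :=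
              mul_le_mul_left (ENNReal.ofReal_le_ofReal hmono) _
      have hμratio : μ (ball y s) ≤ ENNReal.ofReal (1+2*θ) * μ (ball x r) := by
        have hdiff_ne : μ (ball x (r+3*d) \ ball x r) ≠ ⊤ :=
          ((measure_mono Set.diff_subset).trans_lt hball_r3.2).ne
        have hsplit : μ (ball x (r+3*d)) ≤ μ (ball x r) + μ (ball x (r+3*d) \ ball x r) := by
          refine (measure_mono ?_).trans (measure_union_le _ _)
          intro w hw
          by_cases hwin : w ∈ ball x r
          · exact Set.mem_union_left _ hwin
          · exact Set.mem_union_right _ ⟨hw, hwin⟩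
        have h1 : (μ (ball x (r+3*d) \ ball x r)).toReal
            ≤ θ * (μ (ball x (r+3*d))).toReal := by
          have := ENNReal.toReal_mono
            (ENNReal.mul_ne_top ENNReal.ofReal_ne_top hball_r3.2.ne) hannθ
          rwa [ENNReal.toReal_mul, ENNReal.toReal_ofReal hθ0.le] at this
        have h2 : (μ (ball x (r+3*d))).toReal
            ≤ (μ (ball x r)).toReal + (μ (ball x (r+3*d) \ ball x r)).toReal := by
          have h3 := ENNReal.toReal_mono
            (ENNReal.add_ne_top.2 ⟨hball_r.2.ne, hdiff_ne⟩) hsplit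
          rwa [ENNReal.toReal_add hball_r.2.ne hdiff_ne] at h3
        have hbR_le : (μ (ball x (r+3*d))).toReal ≤ (1 + 2*θ) * (μ (ball x r)).toReal :=
          real_ratio hθ0 hθhalf ENNReal.toReal_nonneg (by linarith [h1, h2])
        have hsub3 : ball y s ⊆ ball x (r+3*d) := by
          intro w hw
          rw [mem_ball] at hw ⊢
          calc dist w x ≤ dist w y + dist y x := dist_triangle _ _ _
            _ < s + d := by rw [dist_comm y x, hd_def]; exact add_lt_add_of_lt_of_le hw le_rfl
            _ ≤ r + 3*d := by rw [hs_def] at *; linarith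
        calc μ (ball y s) ≤ μ (ball x (r+3*d)) := measure_mono hsub3
          _ = ENNReal.ofReal (μ (ball x (r+3*d))).toReal :=
              (ENNReal.ofReal_toReal hball_r3.2.ne).symm
          _ ≤ ENNReal.ofReal ((1+2*θ) * (μ (ball x r)).toReal) :=
              ENNReal.ofReal_le_ofReal hbR_le
          _ = ENNReal.ofReal (1+2*θ) * ENNReal.ofReal (μ (ball x r)).toReal :=
              ENNReal.ofReal_mul (by positivity)
          _ = ENNReal.ofReal (1+2*θ) * μ (ball x r) := by
              rw [ENNReal.ofReal_toReal hball_r.2.ne]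
      have hsub1 : ball x r ⊆ ball y s := by
        intro w hw
        rw [mem_ball] at hw ⊢
        calc dist w y ≤ dist w x + dist x y := dist_triangle _ _ _
          _ < r + 2*d := by rw [← hd_def]; nlinarith
          _ = s := hs_def.symm
      have hAx : A μ u x r ≤ (1 + 2*θ) * A μ u y s := by
        rw [A_def, A_def]
        exact avg_ratio (by positivity) hsub1 hball_r.1.ne' hball_r.2.ne
          hball_s.1.ne' hball_s.2.ne hμratio (hInt y s hs0).abs (fun w => abs_nonneg _)
      -- level bound
      have hcmp : |A μ u y s - A μ u y (2*s)| ≤ 2 * D₀ * N :=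
        cmp_le hD₀0.le hball hInt hbmo hs0 (by positivity)
          (ball_subset_ball (by nlinarith)) (hdoub y s hs0)
      have hFya2 : (2*s) ^ α * A μ u y (2*s) ≤ frMax μ α u y := hSy (2*s) (by positivity)
      have h2sα : ((2:ℝ)*s) ^ α = p * s ^ α := by
        rw [hp_def]; exact Real.mul_rpow (by norm_num) hs0.le
      have hsα0 : (0:ℝ) < s ^ α := Real.rpow_pos_of_pos hs0 _
      have habs : 2 * θ * (s ^ α * A μ u y s)
          ≤ E + (4 * D₀ * p / (p-1)) * θ * N * s ^ α := by
        have h1 : p * (s ^ α * A μ u y (2*s)) ≤ E + s ^ α * A μ u y s := by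
          rw [h2sα] at hFya2
          rw [hE_def]
          linarith
        have h2 : A μ u y s ≤ A μ u y (2*s) + 2*D₀*N := by
          have h3 := (abs_le.1 hcmp).2
          linarith
        exact real_absorb hp1 hsα0 hθ0 (by linarith) hE0 h1 h2
      have hfinal : r ^ α * A μ u x r ≤ frMax μ α u y
          + (4 * D₀ * p / (p-1)) * θ * N * s ^ α := by
        have hrsα : r ^ α ≤ s ^ α := Real.rpow_le_rpow hr.le hrs hα0.le
        have hA0 : 0 ≤ A μ u x r := A_nonneg μ u x r
        have h1 : r ^ α * A μ u x r ≤ s ^ α * ((1+2*θ) * A μ u y s) := by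
          calc r ^ α * A μ u x r ≤ r ^ α * ((1+2*θ) * A μ u y s) :=
                mul_le_mul_of_nonneg_left hAx (Real.rpow_nonneg hr.le _)
            _ ≤ s ^ α * ((1+2*θ) * A μ u y s) :=
                mul_le_mul_of_nonneg_right hrsα (by positivity)
        have h3 : s ^ α * A μ u y s = frMax μ α u y - E := by
          rw [hE_def]; ring
        calc r ^ α * A μ u x r ≤ s ^ α * A μ u y s + 2*θ*(s ^ α * A μ u y s) := by
              nlinarith
          _ ≤ (frMax μ α u y - E) + (E + (4 * D₀ * p / (p-1)) * θ * N * s ^ α) := by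
              rw [← h3]; exact add_le_add le_rfl habs
          _ = frMax μ α u y + (4 * D₀ * p / (p-1)) * θ * N * s ^ α := by ring
      have hθsα : θ * s ^ α ≤ (K * 3 ^ δ * 2 ^ α) * d ^ α := by
        have hsle : s ^ α ≤ (2*r) ^ α := Real.rpow_le_rpow hs0.le hs2r hα0.le
        have h2r : ((2:ℝ)*r) ^ α = 2 ^ α * r ^ α := Real.mul_rpow (by norm_num) hr.le
        have h3d : ((3:ℝ)*d/r) ^ δ = 3 ^ δ * d ^ δ / r ^ δ := by
          rw [Real.div_rpow (by positivity) hr.le, Real.mul_rpow (by norm_num) hd.le]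
        have hkey : d ^ δ * r ^ α ≤ d ^ α * r ^ δ := by
          have hdr' : d ≤ r := by nlinarith
          have h1 : d ^ (δ - α) ≤ r ^ (δ - α) :=
            Real.rpow_le_rpow hd.le hdr' (by linarith)
          have hd1 : d ^ δ = d ^ α * d ^ (δ - α) := by
            rw [← Real.rpow_add hd, add_sub_cancel]
          have hr1 : r ^ δ = r ^ α * r ^ (δ - α) := by
            rw [← Real.rpow_add hr, add_sub_cancel]
          rw [hd1, hr1]
          calc d ^ α * d ^ (δ-α) * r ^ α ≤ d ^ α * r ^ (δ-α) * r ^ α := by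
                refine mul_le_mul_of_nonneg_right
                  (mul_le_mul_of_nonneg_left h1 (Real.rpow_nonneg hd.le _))
                  (Real.rpow_nonneg hr.le _)
            _ = d ^ α * (r ^ α * r ^ (δ-α)) := by ring
        have hrδ0 : (0:ℝ) < r ^ δ := Real.rpow_pos_of_pos hr _
        calc θ * s ^ α ≤ θ * (2 ^ α * r ^ α) := by
              refine mul_le_mul_of_nonneg_left (hsle.trans_eq h2r) hθ0.le
          _ = K * (3 ^ δ * d ^ δ / r ^ δ) * (2 ^ α * r ^ α) := by rw [hθ_def, h3d]
          _ = (K * 3 ^ δ * 2 ^ α) * (d ^ δ * r ^ α / r ^ δ) := by ring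
          _ ≤ (K * 3 ^ δ * 2 ^ α) * d ^ α := by
              have h3δ0 : (0:ℝ) < (3:ℝ) ^ δ := Real.rpow_pos_of_pos (by norm_num) _
              have h2α0 : (0:ℝ) < (2:ℝ) ^ α := Real.rpow_pos_of_pos (by norm_num) _
              refine mul_le_mul_of_nonneg_left ?_ (by positivity)
              rw [div_le_iff₀ hrδ0]
              exact hkey
      have hNθ : (4 * D₀ * p / (p-1)) * θ * N * s ^ α ≤ C₂ * N * d ^ α := by
        have hp1' : (0:ℝ) < p - 1 := by linarith
        have hc : (0:ℝ) ≤ 4 * D₀ * p / (p-1) := by positivity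
        calc (4 * D₀ * p / (p-1)) * θ * N * s ^ α
            = (4 * D₀ * p / (p-1)) * N * (θ * s ^ α) := by ring
          _ ≤ (4 * D₀ * p / (p-1)) * N * ((K * 3 ^ δ * 2 ^ α) * d ^ α) :=
              mul_le_mul_of_nonneg_left hθsα (by positivity)
          _ = C₂ * N * d ^ α := by rw [hC₂_def]; ring
      have hfinal2 : r ^ α * A μ u x r ≤ frMax μ α u y + C₂ * N * d ^ α :=
        hfinal.trans (by linarith)
      refine hfinal2.trans ?_
      have hpos : (0:ℝ) ≤ C₁ * N * d ^ α := by positivity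
      linarith
    · -- small radius case : r < Λ d
      push_neg at hcase
      obtain ⟨k₀, hk₀⟩ := pow_unbounded_of_one_lt (Λ*d/r) (show (1:ℝ) < 2 by norm_num)
      have hex : ∃ k : ℕ, Λ * d ≤ 2 ^ k * r :=
        ⟨k₀, by rw [div_lt_iff₀ hr] at hk₀; linarith⟩
      obtain ⟨k, hk, hkmin, hk1⟩ : ∃ k : ℕ, Λ * d ≤ 2 ^ k * r
          ∧ 2 ^ (k-1) * r < Λ * d ∧ 1 ≤ k := by
        refine ⟨Nat.find hex, Nat.find_spec hex, ?_, ?_⟩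
        · have h1 : 1 ≤ Nat.find hex := by
            rw [Nat.one_le_iff_ne_zero]
            intro h0
            have h2 := Nat.find_spec hex
            rw [h0, pow_zero, one_mul] at h2
            linarith
          have := Nat.find_min hex (m := Nat.find hex - 1) (by omega)
          push_neg at this
          exact this
        · rw [Nat.one_le_iff_ne_zero]
          intro h0
          have h2 := Nat.find_spec hex
          rw [h0, pow_zero, one_mul] at h2
          linarith
      have h2k : (0:ℝ) < 2 ^ k * r := by positivity
      have hchain := chain_le hD₀0.le hball hInt hbmo hdoub x hr k
      obtain ⟨s', hs'_def, hs'0⟩ : ∃ s' : ℝ, s' = 2 ^ k * r + d ∧ 0 < s' :=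
        ⟨_, rfl, by positivity⟩
      have h2d : 2 * d ≤ 2 ^ k * r := by nlinarith
      have hcmp2 : |A μ u x (2 ^ k * r) - A μ u y s'| ≤ 2 * D₀ * N := by
        refine cmp_le hD₀0.le hball hInt hbmo h2k hs'0 ?_ ?_
        · intro w hw
          rw [mem_ball] at hw ⊢
          calc dist w y ≤ dist w x + dist x y := dist_triangle _ _ _
            _ < 2^k*r + d := by rw [← hd_def]; exact add_lt_add_of_lt_of_le hw le_rfl
            _ = s' := hs'_def.symm
        · have hsub2 : ball y s' ⊆ ball x (2 * (2^k*r)) := by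
            intro w hw
            rw [mem_ball] at hw ⊢
            calc dist w x ≤ dist w y + dist y x := dist_triangle _ _ _
              _ < s' + d := by rw [dist_comm y x, hd_def]; exact add_lt_add_of_lt_of_le hw le_rfl
              _ ≤ 2 * (2^k*r) := by rw [hs'_def]; linarith
          exact le_trans (measure_mono hsub2) (hdoub x (2^k*r) h2k)
      have hA_le : A μ u x r ≤ A μ u y s' + 2 * D₀ * N * ((k:ℝ)+1) := by
        have h1 := (abs_le.1 hcmp2).2
        nlinarith [hchain]
      have hrs' : r ^ α ≤ s' ^ α := by
        refine Real.rpow_le_rpow hr.le ?_ hα0.le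
        have h1 : (1:ℝ) ≤ 2^k := one_le_pow₀ (by norm_num)
        rw [hs'_def]
        nlinarith
      have hFys' : s' ^ α * A μ u y s' ≤ frMax μ α u y := hSy s' hs'0
      obtain ⟨m, hm⟩ : ∃ m, k = m+1 := ⟨k-1, by omega⟩
      have hkmin' : (2:ℝ)^m * r < Λ * d := by
        have : k - 1 = m := by omega
        rwa [this] at hkmin
      have hkr : ((k:ℝ)+1) * r ^ α ≤ (1 + 2/α) * (2*Λ) ^ α * d ^ α := by
        have hb : (1:ℝ) ≤ (2:ℝ)^k := one_le_pow₀ (by norm_num)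
        have hrle : r ≤ 2*Λ*d / 2^k := by
          rw [le_div_iff₀ (by positivity)]
          calc r * 2^k = 2 * (2^m * r) := by
                rw [hm, pow_succ]; ring
            _ ≤ 2 * (Λ*d) := by nlinarith
            _ = 2*Λ*d := by ring
        have hrα : r ^ α ≤ (2*Λ*d) ^ α / ((2:ℝ)^k) ^ α := by
          rw [← Real.div_rpow (by positivity) (by positivity)]
          exact Real.rpow_le_rpow hr.le hrle hα0.le
        have hexp : ((k:ℝ)+1) ≤ (1 + 2/α) * ((2:ℝ)^k) ^ α := by
          have hlog : ((2:ℝ)^k) ^ α = Real.exp (α * ((k:ℝ) * Real.log 2)) := by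
            rw [Real.rpow_def_of_pos (by positivity), Real.log_pow]
            ring_nf
          have hexp1 : 1 + α * ((k:ℝ) * Real.log 2) ≤ ((2:ℝ)^k) ^ α := by
            rw [hlog]
            have := Real.add_one_le_exp (α * ((k:ℝ) * Real.log 2))
            linarith
          have hlog2 : (1:ℝ)/2 ≤ Real.log 2 := by
            have := Real.log_two_gt_d9
            linarith
          have hkn : (0:ℝ) ≤ (k:ℝ) := Nat.cast_nonneg k
          have hk2 : 1 + α * ((k:ℝ) * (1/2)) ≤ 1 + α * ((k:ℝ) * Real.log 2) := by
            nlinarith [mul_nonneg (mul_nonneg hα0.le hkn)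
              (by linarith : (0:ℝ) ≤ Real.log 2 - 1/2)]
          have hmain : ((k:ℝ)+1) ≤ (1 + 2/α) * (1 + α * ((k:ℝ) * (1/2))) := by
            have h2a : (0:ℝ) < 2/α := div_pos (by norm_num) hα0
            have hterm : (2/α) * (α * ((k:ℝ) * (1/2))) = (k:ℝ) := by
              field_simp
            have hstep : (1 + 2/α) * (1 + α * ((k:ℝ) * (1/2)))
                = 1 + α * ((k:ℝ) * (1/2)) + 2/α + (2/α) * (α * ((k:ℝ) * (1/2))) := by ring
            rw [hstep, hterm]
            nlinarith
          calc ((k:ℝ)+1) ≤ (1 + 2/α) * (1 + α * ((k:ℝ) * (1/2))) := hmain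
            _ ≤ (1 + 2/α) * (1 + α * ((k:ℝ) * Real.log 2)) := by
                refine mul_le_mul_of_nonneg_left hk2 (by positivity)
            _ ≤ (1 + 2/α) * ((2:ℝ)^k) ^ α := by
                refine mul_le_mul_of_nonneg_left hexp1 (by positivity)
        have hbα : (0:ℝ) < ((2:ℝ)^k) ^ α := Real.rpow_pos_of_pos (by positivity) _
        have h2Λd : ((2:ℝ)*Λ*d) ^ α = (2*Λ) ^ α * d ^ α := by
          rw [show (2:ℝ)*Λ*d = (2*Λ)*d by ring]
          exact Real.mul_rpow (by nlinarith) hd.le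
        calc ((k:ℝ)+1) * r ^ α
            ≤ ((1 + 2/α) * ((2:ℝ)^k) ^ α) * ((2*Λ*d) ^ α / ((2:ℝ)^k) ^ α) := by
              refine mul_le_mul hexp hrα (Real.rpow_nonneg hr.le _) (by positivity)
          _ = (1 + 2/α) * (2*Λ*d) ^ α := by
              field_simp
          _ = (1 + 2/α) * (2*Λ) ^ α * d ^ α := by rw [h2Λd]; ring
      have hfinal : r ^ α * A μ u x r ≤ frMax μ α u y + C₁ * N * d ^ α := by
        have hA0 : 0 ≤ A μ u y s' := A_nonneg μ u y s'
        have hr0 : (0:ℝ) ≤ r ^ α := Real.rpow_nonneg hr.le _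
        have h1 : r ^ α * A μ u x r
            ≤ r ^ α * A μ u y s' + 2*D₀*N*(((k:ℝ)+1) * r ^ α) := by
          nlinarith [mul_le_mul_of_nonneg_left hA_le hr0]
        have h2 : r ^ α * A μ u y s' ≤ s' ^ α * A μ u y s' :=
          mul_le_mul_of_nonneg_right hrs' hA0
        have h3 : 2*D₀*N*(((k:ℝ)+1) * r ^ α) ≤ C₁ * N * d ^ α := by
          calc 2*D₀*N*(((k:ℝ)+1) * r ^ α)
              ≤ 2*D₀*N * ((1 + 2/α) * (2*Λ) ^ α * d ^ α) := by
                refine mul_le_mul_of_nonneg_left hkr (by positivity)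
            _ = C₁ * N * d ^ α := by rw [hC₁_def]; ring
        linarith
      refine hfinal.trans ?_
      have hpos : (0:ℝ) ≤ C₂ * N * d ^ α := by positivity
      linarith
  rcases eq_or_ne x₀ y₀ with rfl | hne
  · rw [dist_self, Real.zero_rpow hα0.ne', mul_zero, sub_self, abs_zero]
  · have hd : 0 < dist x₀ y₀ := dist_pos.2 hne
    have h1 := key x₀ y₀ hd
    have h2 := key y₀ x₀ (by rwa [dist_comm])
    rw [dist_comm y₀ x₀] at h2
    rw [abs_sub_le_iff]
    constructor <;> linarith
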